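/- Let u solve the self-expander ODE with n ≥ 3, u(0)=C, u'(0)=0, and suppose u'' has exactly one zero ŷ_C > 0 with u'' > 0 on [0,ŷ_C) and u'' ≤ 0 on [ŷ_C,∞). If u'(ŷ_C) → ∞ while u(ŷ_C)/ŷ_C stays bounded by D, then u(ŷ_C)·ŷ_C → 0; combined with u ≥ C on [0,∞) this gives u(ŷ_C)/ŷ_C ≥ C², contradicting boundedness when C → ∞. -/

import Mathlib

open Set Filter Topology

/-- The packaged contradiction in the proof that the asymptotic angle tends to
`π/2` as `C → ∞`. For a sequence of solutions with initial values `Ck → ∞`,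
inflection points `yk` (zeros of `u''`) at which the ODE gives
`u(yk)/yk = -2(n-2)/(u(yk)·yk) + u'(yk)`, with `u(yk) ≥ Ck` (since `u` is
increasing) and `u'(yk) → ∞` while `u(yk)/yk ≤ D` stays bounded: then
`u(yk)·yk → 0`, eventually `u(yk)/yk ≥ Ck²` — a contradiction. -/
theorem asymptotic_angle_blowup_contradiction
    (n : ℕ) (hn : 3 ≤ n) (D : ℝ) (hD : 0 < D)
    (Ck yk uk vk : ℕ → ℝ)
    (hCpos : ∀ k, 0 < Ck k)
    (hCtop : Tendsto Ck atTop atTop)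
    (hypos : ∀ k, 0 < yk k)
    (hugeC : ∀ k, Ck k ≤ uk k)
    (hODE : ∀ k, uk k / yk k = -(2 * ((n : ℝ) - 2)) / (uk k * yk k) + vk k)
    (hbdd : ∀ k, uk k / yk k ≤ D)
    (hvtop : Tendsto vk atTop atTop) :
    Tendsto (fun k => uk k * yk k) atTop (𝓝 0) ∧
    (∀ᶠ k in atTop, (Ck k) ^ 2 ≤ uk k / yk k) ∧
    False := by
  have hupos : ∀ k, 0 < uk k := fun k => lt_of_lt_of_le (hCpos k) (hugeC k)
  have hPpos : ∀ k, 0 < uk k * yk k := fun k => mul_pos (hupos k) (hypos k)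
  have hc : (0:ℝ) < 2 * ((n:ℝ) - 2) := by
    have : (3:ℝ) ≤ n := by exact_mod_cast hn
    nlinarith
  have h2 : ∀ k, vk k - uk k / yk k = 2 * ((n:ℝ) - 2) * (uk k * yk k)⁻¹ := by
    intro k
    have h := hODE k
    have h' : vk k - uk k / yk k = 2 * ((n:ℝ) - 2) / (uk k * yk k) := by
      rw [h]; ring
    rw [h', div_eq_mul_inv]
  have hinv : ∀ k, (uk k * yk k)⁻¹ = (vk k - uk k / yk k) / (2 * ((n:ℝ) - 2)) := by
    intro k
    rw [h2 k]
    exact (mul_div_cancel_left₀ _ hc.ne').symm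
  have hinvtop : Tendsto (fun k => (uk k * yk k)⁻¹) atTop atTop := by
    have h1 : Tendsto (fun k => (vk k - D) / (2 * ((n:ℝ) - 2))) atTop atTop :=
      (hvtop.atTop_add tendsto_const_nhds).atTop_div_const hc
    refine tendsto_atTop_mono (fun k => ?_) h1
    rw [hinv k]
    gcongr
    linarith [hbdd k]
  have hP0 : Tendsto (fun k => uk k * yk k) atTop (𝓝 0) := by
    refine (hinvtop.inv_tendsto_atTop).congr fun k => ?_
    simp
  have hPsmall : ∀ᶠ k in atTop, uk k * yk k ≤ 1 :=
    hP0.eventually (eventually_le_nhds (by norm_num : (0:ℝ) < 1))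
  have hev : ∀ᶠ k in atTop, (Ck k) ^ 2 ≤ uk k / yk k := by
    filter_upwards [hPsmall] with k hk
    have h1 : uk k / yk k = uk k * uk k / (uk k * yk k) :=
      (mul_div_mul_left _ _ (hupos k).ne').symm
    rw [h1]
    have h3 : Ck k ^ 2 ≤ uk k * uk k := by nlinarith [hugeC k, hCpos k]
    calc Ck k ^ 2 = Ck k ^ 2 / 1 := by ring
      _ ≤ uk k * uk k / (uk k * yk k) :=
        div_le_div₀ (by nlinarith [hupos k]) h3 (hPpos k) hk
  refine ⟨hP0, hev, ?_⟩
  have hCbig : ∀ᶠ k in atTop, D < (Ck k) ^ 2 := by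
    have h4 : Tendsto (fun k => (Ck k) ^ 2) atTop atTop :=
      Tendsto.congr (fun k => by ring) (hCtop.atTop_mul_atTop₀ hCtop)
    exact h4.eventually_gt_atTop D
  rcases (hev.and hCbig).exists with ⟨k, h1, h2⟩
  linarith [hbdd k]
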